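/- If N is a finite nonempty nilpotent semigroup with |N| = n, then the elements of N can be enumerated as sphabet_1, ..., s_n so that for every i, the subsemigroup generated by {s_1,...,s_i} equals {s_1,...,s_i}; consequently every subset of N is a face of the subsemigroup complex of N, i.e., the complex is the uniform matroid U_{n,n}. -/

import Mathlib

section SgAux

variable {N : Type*} [Semigroup N]

/-- `x` is a product of `m` elements of `N`. -/
def sgReach (m : ℕ) (x : N) : Prop :=
  ∃ (y : N) (l : List N), l.length + 1 = m ∧ l.foldl (· * ·) y = x

lemma sgReach_one (x : N) : sgReach 1 x := ⟨x, [], rfl, rfl⟩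

lemma sgFold_z (z : N) (hz : ∀ x : N, z * x = z ∧ x * z = z) :
    ∀ l : List N, l.foldl (· * ·) z = z := by
  intro l
  induction l with
  | nil => rfl
  | cons a t ih => simpa [(hz a).1] using ih

lemma sgReach_mul {a b : ℕ} {x y : N} (hx : sgReach a x) (hy : sgReach b y) :
    sgReach (a + b) (x * y) := by
  obtain ⟨y1, l1, hl1, hf1⟩ := hx
  obtain ⟨y2, l2, hl2, hf2⟩ := hy
  refine ⟨y1, l1 ++ y2 :: l2, by simp only [List.length_append, List.length_cons]; omega, ?_⟩
  rw [List.foldl_append]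
  simp only [List.foldl_cons, hf1]
  rw [List.foldl_assoc, hf2]

lemma sgReach_z (z : N) (hz : ∀ x : N, z * x = z ∧ x * z = z) {m : ℕ} (hm : 1 ≤ m) :
    sgReach m z :=
  ⟨z, List.replicate (m - 1) z, by simp; omega, sgFold_z z hz _⟩

lemma sgReach_large (z : N) (hz : ∀ x : N, z * x = z ∧ x * z = z) {k : ℕ} (hk : 1 ≤ k)
    (hnil : ∀ (x : N) (l : List N), l.length + 1 = k → l.foldl (· * ·) x = z)
    {m : ℕ} (hm : k ≤ m) {x : N} (hx : sgReach m x) : x = z := by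
  obtain ⟨y, l, hl, hf⟩ := hx
  have hsplit : l = l.take (k - 1) ++ l.drop (k - 1) := (List.take_append_drop _ _).symm
  rw [hsplit, List.foldl_append] at hf
  have hzstep : (l.take (k - 1)).foldl (· * ·) y = z := by
    apply hnil
    rw [List.length_take]
    omega
  rw [hzstep, sgFold_z z hz] at hf
  exact hf.symm

open Classical in
/-- Largest `m ≤ k` such that `x` is a product of `m` elements. -/
noncomputable def sgD (k : ℕ) (x : N) : ℕ :=
  Nat.findGreatest (fun m => sgReach m x) k

lemma sgD_pos {k : ℕ} (hk : 1 ≤ k) (x : N) : 1 ≤ sgD k x := by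
  classical
  unfold sgD
  exact Nat.le_findGreatest hk (sgReach_one x)

lemma sgD_le {k : ℕ} (x : N) : sgD k x ≤ k := by
  classical
  unfold sgD
  exact Nat.findGreatest_le k

lemma sgD_spec {k : ℕ} (hk : 1 ≤ k) (x : N) : sgReach (sgD k x) x := by
  classical
  unfold sgD
  exact Nat.findGreatest_spec (P := fun m => sgReach m x) hk (sgReach_one x)

lemma sgD_ge {k m : ℕ} {x : N} (hm : m ≤ k) (h : sgReach m x) : m ≤ sgD k x := by
  classical
  unfold sgD
  exact Nat.le_findGreatest hm h

lemma sgD_eq_k (z : N) (hz : ∀ x : N, z * x = z ∧ x * z = z) {k : ℕ} (hk : 1 ≤ k)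
    (hnil : ∀ (x : N) (l : List N), l.length + 1 = k → l.foldl (· * ·) x = z)
    {x : N} (h : sgD k x = k) : x = z :=
  sgReach_large z hz hk hnil (le_of_eq h.symm) (sgD_spec hk x)

lemma sgD_z (z : N) (hz : ∀ x : N, z * x = z ∧ x * z = z) {k : ℕ} (hk : 1 ≤ k) :
    sgD k z = k :=
  le_antisymm (sgD_le z) (sgD_ge le_rfl (sgReach_z z hz hk))

/-- Key lemma: a product is either `z` or has strictly larger depth. -/
lemma sgD_mul (z : N) (hz : ∀ x : N, z * x = z ∧ x * z = z) {k : ℕ} (hk : 1 ≤ k)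
    (hnil : ∀ (x : N) (l : List N), l.length + 1 = k → l.foldl (· * ·) x = z)
    (x y : N) : x * y = z ∨ sgD k x + sgD k y ≤ sgD k (x * y) := by
  have hr : sgReach (sgD k x + sgD k y) (x * y) :=
    sgReach_mul (sgD_spec hk x) (sgD_spec hk y)
  rcases le_or_gt (sgD k x + sgD k y) k with h | h
  · exact Or.inr (sgD_ge h hr)
  · exact Or.inl (sgReach_large z hz hk hnil h.le hr)

end SgAux

theorem stmt9 (N : Type*) [Semigroup N] [Fintype N] [Nonempty N]
    (z : N) (hz : ∀ x : N, z * x = z ∧ x * z = z)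
    (hnil : ∃ k : ℕ, 1 ≤ k ∧
      ∀ (x : N) (l : List N), l.length + 1 = k → l.foldl (· * ·) x = z) :
    (∃ l : List N, l.Nodup ∧ (∀ x : N, x ∈ l) ∧
      ∀ i : ℕ, i ≤ l.length →
        (Subsemigroup.closure {x | x ∈ l.take i} : Set N) = {x | x ∈ l.take i}) ∧
    (∀ X : Set N, ∃ l : List N, l.Nodup ∧ {x | x ∈ l} = X ∧
      ∀ (i : ℕ) (h : i < l.length),
        l.get ⟨i, h⟩ ∉ Subsemigroup.closure {x | x ∈ l.take i}) := by
  classical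
  obtain ⟨k, hk, hnil⟩ := hnil
  -- the comparison function : decreasing depth
  set le : N → N → Bool := fun a b => decide (sgD k b ≤ sgD k a) with hle
  have htrans : ∀ a b c : N, le a b = true → le b c = true → le a c = true := by
    intro a b c
    simp only [hle, decide_eq_true_eq]
    omega
  have htotal : ∀ a b : N, (le a b || le b a) = true := by
    intro a b
    simp only [hle, Bool.or_eq_true, decide_eq_true_eq]
    omega
  -- in a sorted list, prefix elements have larger depth than later elements
  have hsorted_prefix : ∀ (l : List N), l.Pairwise (fun a b => le a b = true) →
      ∀ (i : ℕ) (x : N), x ∈ l.take i → ∀ (j : ℕ) (hj : j < l.length), i ≤ j →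
        sgD k (l.get ⟨j, hj⟩) ≤ sgD k x := by
    intro l hp i x hx j hj hij
    rw [List.pairwise_iff_get] at hp
    obtain ⟨⟨m, hm⟩, hmx⟩ := List.mem_iff_get.mp hx
    have hmi : m < i := by rw [List.length_take] at hm; omega
    have hml : m < l.length := by rw [List.length_take] at hm; omega
    have hx' : l.get ⟨m, hml⟩ = x := by
      rw [← hmx]
      simp only [List.get_eq_getElem, List.getElem_take]
    rw [← hx']
    have := hp ⟨m, hml⟩ ⟨j, hj⟩ (by simp only [Fin.mk_lt_mk]; omega)
    simpa [hle] using this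
  -- anything with strictly bigger depth than a prefix element is in the prefix
  have hmem_prefix : ∀ (l : List N), l.Pairwise (fun a b => le a b = true) →
      ∀ (i : ℕ) (x : N), x ∈ l.take i → ∀ w : N, w ∈ l → sgD k x < sgD k w →
        w ∈ l.take i := by
    intro l hp i x hx w hw hdw
    by_contra hwn
    have hwdrop : w ∈ l.drop i := by
      have := (List.take_append_drop i l) ▸ hw
      rcases List.mem_append.mp this with h | h
      · exact absurd h hwn
      · exact h
    obtain ⟨⟨m, hm⟩, hmw⟩ := List.mem_iff_get.mp hwdrop
    have hm' : i + m < l.length := by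
      rw [List.length_drop] at hm; omega
    have hgw : l.get ⟨i + m, hm'⟩ = w := by
      rw [← hmw]
      simp [List.getElem_drop]
    have := hsorted_prefix l hp i x hx (i + m) hm' (by omega)
    rw [hgw] at this
    omega
  constructor
  · -- Part 1
    set l : List N := (Finset.univ : Finset N).toList.mergeSort le with hl
    have hperm : l.Perm (Finset.univ : Finset N).toList := List.mergeSort_perm _ _
    have hnodup : l.Nodup := hperm.symm.nodup (Finset.nodup_toList _)
    have hmeml : ∀ x : N, x ∈ l :=
      fun x => hperm.mem_iff.mpr (Finset.mem_toList.mpr (Finset.mem_univ x))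
    have hpair : l.Pairwise (fun a b => le a b = true) :=
      List.pairwise_mergeSort htrans htotal _
    refine ⟨l, hnodup, hmeml, ?_⟩
    intro i _
    set S : Set N := {x | x ∈ l.take i} with hS
    -- S is closed under multiplication
    have hmul : ∀ x ∈ S, ∀ y ∈ S, x * y ∈ S := by
      intro x hx y hy
      rcases sgD_mul z hz hk hnil x y with hzz | hdd
      · rw [hzz]
        by_cases hxz : x = z
        · rwa [← hxz]
        · refine hmem_prefix l hpair i x hx z (hmeml z) ?_
          have h1 : sgD k z = k := sgD_z z hz hk
          have h2 : sgD k x ≤ k := sgD_le x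
          have h3 : sgD k x ≠ k := fun h => hxz (sgD_eq_k z hz hk hnil h)
          omega
      · refine hmem_prefix l hpair i x hx (x * y) (hmeml _) ?_
        have := sgD_pos hk y
        omega
    have hclle : (Subsemigroup.closure S : Set N) ⊆ S := by
      have : Subsemigroup.closure S ≤ ⟨S, fun {a b} ha hb => hmul a ha b hb⟩ :=
        Subsemigroup.closure_le.mpr (fun x hx => hx)
      exact this
    exact le_antisymm hclle Subsemigroup.subset_closure
  · -- Part 2
    intro X
    set l : List N := X.toFinset.toList.mergeSort le with hl
    have hperm : l.Perm X.toFinset.toList := List.mergeSort_perm _ _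
    have hnodup : l.Nodup := hperm.symm.nodup (Finset.nodup_toList _)
    have hmeml : ∀ x : N, x ∈ l ↔ x ∈ X := by
      intro x
      rw [hperm.mem_iff, Finset.mem_toList, Set.mem_toFinset]
    have hpair : l.Pairwise (fun a b => le a b = true) :=
      List.pairwise_mergeSort htrans htotal _
    refine ⟨l, hnodup, by ext x; exact hmeml x, ?_⟩
    intro i hi
    set g : N := l.get ⟨i, hi⟩ with hg
    set S : Set N := {x | x ∈ l.take i} with hS
    -- g is not in the prefix
    have hgnotS : g ∉ S := by
      intro hgS
      have hdisj : (l.take i).Disjoint (l.drop i) := List.disjoint_take_drop hnodup le_rfl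
      have hgdrop : g ∈ l.drop i := by
        rw [List.drop_eq_getElem_cons hi]
        exact List.mem_cons_self
      exact hdisj hgS hgdrop
    -- all prefix elements have depth ≥ depth of g
    have hSdepth : ∀ x ∈ S, sgD k g ≤ sgD k x := fun x hx =>
      hsorted_prefix l hpair i x hx i hi le_rfl
    by_cases hgz : g = z
    · -- the prefix must be empty
      have hSempty : S = ∅ := by
        ext x
        simp only [Set.mem_empty_iff_false, iff_false]
        intro hx
        have h1 : sgD k g ≤ sgD k x := hSdepth x hx
        have h2 : sgD k g = k := by rw [hgz]; exact sgD_z z hz hk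
        have h3 : sgD k x ≤ k := sgD_le x
        have h4 : x = z := sgD_eq_k z hz hk hnil (by omega)
        exact hgnotS (by rwa [hgz, ← h4])
      rw [hSempty, Subsemigroup.closure_empty]
      exact fun h => h
    · -- depth argument
      intro hmem
      have key : ∀ (p : N), p ∈ Subsemigroup.closure S →
          p = z ∨ p ∈ S ∨ sgD k g + 1 ≤ sgD k p := by
        intro p hp
        induction hp using Subsemigroup.closure_induction with
        | mem x hx => exact Or.inr (Or.inl hx)
        | mul x y hx hy ihx ihy =>
          rcases ihx with hxz | hx'
          · exact Or.inl (by rw [hxz]; exact (hz y).1)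
          rcases ihy with hyz | hy'
          · exact Or.inl (by rw [hyz]; exact (hz x).2)
          have hdx : sgD k g ≤ sgD k x := by
            rcases hx' with h | h
            · exact hSdepth x h
            · omega
          have hdy : 1 ≤ sgD k y := sgD_pos hk y
          rcases sgD_mul z hz hk hnil x y with h | h
          · exact Or.inl h
          · right; right; omega
      rcases key g hmem with h | h | h
      · exact hgz h
      · exact hgnotS h
      · omega
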